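/- Let p be a prime and x, y, z ∈ ℚ_p. Set n = [[1,x,z,y],[0,1,y,0],[0,0,1,0],[0,0,−x,1]] and σ = s₁s₂s₁. Then σ·n ∈ P_K(ℚ_p)·B(p) if and only if v_p(z) < min{0, v_p(x), v_p(y)}. Moreover, in that case, whenever σ·n = q·γ with q ∈ P_K(ℚ_p) and γ ∈ B(p), one has m₁(q) ∈ z⁻¹·ℤ_p^× and m₂(q) ∈ [[−1 + xy/z, −y²/z],[−x²/z, 1 + xy/z]]·Γ₀(p). -/

import Mathlib

open Matrix

/-- The standard symplectic similitude matrix `J`. -/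
noncomputable def J4 (p : ℕ) [Fact p.Prime] : Matrix (Fin 4) (Fin 4) ℚ_[p] :=
  !![0, 0, 1, 0; 0, 0, 0, 1; -1, 0, 0, 0; 0, -1, 0, 0]

/-- `GSp₄(ℚ_p)`: invertible 4×4 matrices `g` with `gᵀ·J·g = μ·J` for some `μ ≠ 0`. -/
def GSp4 (p : ℕ) [Fact p.Prime] : Set (Matrix (Fin 4) (Fin 4) ℚ_[p]) :=
  {g | g.det ≠ 0 ∧ ∃ μ : ℚ_[p], μ ≠ 0 ∧ gᵀ * J4 p * g = μ • J4 p}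

/-- The congruence subgroup `B(p)` of `GSp₄(ℤ_p)`: all entries in `ℤ_p`, similitude factor a
unit, and the entries at positions (2,1), (3,1), (4,1), (3,2), (4,2), (3,4) in `pℤ_p`. -/
def Bp (p : ℕ) [Fact p.Prime] : Set (Matrix (Fin 4) (Fin 4) ℚ_[p]) :=
  {g | (∀ i j, ‖g i j‖ ≤ 1) ∧ (∃ μ : ℚ_[p], ‖μ‖ = 1 ∧ gᵀ * J4 p * g = μ • J4 p) ∧
    ‖g 1 0‖ ≤ (p : ℝ)⁻¹ ∧ ‖g 2 0‖ ≤ (p : ℝ)⁻¹ ∧ ‖g 3 0‖ ≤ (p : ℝ)⁻¹ ∧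
    ‖g 2 1‖ ≤ (p : ℝ)⁻¹ ∧ ‖g 3 1‖ ≤ (p : ℝ)⁻¹ ∧ ‖g 2 3‖ ≤ (p : ℝ)⁻¹}

/-- The Klingen parabolic `P_K(ℚ_p)`: entries at positions (2,1), (3,1), (4,1), (3,2),
(3,4) vanish. -/
def PK (p : ℕ) [Fact p.Prime] : Set (Matrix (Fin 4) (Fin 4) ℚ_[p]) :=
  {g | g ∈ GSp4 p ∧ g 1 0 = 0 ∧ g 2 0 = 0 ∧ g 3 0 = 0 ∧ g 2 1 = 0 ∧ g 2 3 = 0}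

/-- The `GL₂`-block `m₂(q)` of an element of the Klingen parabolic. -/
def m2K (p : ℕ) [Fact p.Prime] (q : Matrix (Fin 4) (Fin 4) ℚ_[p]) :
    Matrix (Fin 2) (Fin 2) ℚ_[p] :=
  !![q 1 1, q 1 3; q 3 1, q 3 3]

/-- `Γ₀(p) = {γ ∈ GL₂(ℤ_p) : γ₂₁ ∈ pℤ_p}`. -/
def Gamma0 (p : ℕ) [Fact p.Prime] : Set (Matrix (Fin 2) (Fin 2) ℚ_[p]) :=
  {γ | (∀ i j, ‖γ i j‖ ≤ 1) ∧ ‖γ.det‖ = 1 ∧ ‖γ 1 0‖ ≤ (p : ℝ)⁻¹}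

/-- The Weyl element `s₁`. -/
noncomputable def s1 (p : ℕ) [Fact p.Prime] : Matrix (Fin 4) (Fin 4) ℚ_[p] :=
  !![0, 1, 0, 0; 1, 0, 0, 0; 0, 0, 0, 1; 0, 0, 1, 0]

/-- The Weyl element `s₂`. -/
noncomputable def s2 (p : ℕ) [Fact p.Prime] : Matrix (Fin 4) (Fin 4) ℚ_[p] :=
  !![1, 0, 0, 0; 0, 0, 0, 1; 0, 0, 1, 0; 0, -1, 0, 0]

/-- The unipotent matrix `n` attached to `(x, y, z)` (Klingen setting). -/
noncomputable def nK (p : ℕ) [Fact p.Prime] (x y z : ℚ_[p]) : Matrix (Fin 4) (Fin 4) ℚ_[p] :=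
  !![1, x, z, y; 0, 1, y, 0; 0, 0, 1, 0; 0, 0, -x, 1]


section Aux
variable {p : ℕ} [Fact p.Prime]

lemma JJ4 : J4 p * J4 p = -1 := by
  ext i j
  fin_cases i <;> fin_cases j <;>
    simp [J4, Matrix.mul_apply, Fin.sum_univ_four, Matrix.one_apply] <;> rfl

lemma Mexp (x y z : ℚ_[p]) :
    s1 p * s2 p * s1 p * nK p x y z = !![0,0,1,0; 0,1,y,0; -1,-x,-z,-y; 0,0,-x,1] := by
  ext i j
  fin_cases i <;> fin_cases j <;>
    simp [s1, s2, nK, Matrix.mul_apply, Fin.sum_univ_four] <;> rfl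

set_option maxHeartbeats 1000000 in
lemma MJM (x y z : ℚ_[p]) :
    (!![0,0,1,0; 0,1,y,0; -1,-x,-z,-y; 0,0,-x,1] : Matrix (Fin 4) (Fin 4) ℚ_[p])ᵀ * J4 p *
      !![0,0,1,0; 0,1,y,0; -1,-x,-z,-y; 0,0,-x,1] = J4 p := by
  ext i j
  fin_cases i <;> fin_cases j <;>
    · simp [J4, Matrix.mul_apply, Matrix.transpose_apply, Fin.sum_univ_four]
      try simp [Matrix.vecHead, Matrix.vecTail, Matrix.transpose_apply]
      try ring

set_option maxHeartbeats 1000000 in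
lemma Gexp (γ : Matrix (Fin 4) (Fin 4) ℚ_[p]) :
    -(J4 p * γᵀ * J4 p) =
      !![γ 2 2, γ 3 2, -γ 0 2, -γ 1 2;
         γ 2 3, γ 3 3, -γ 0 3, -γ 1 3;
         -γ 2 0, -γ 3 0, γ 0 0, γ 1 0;
         -γ 2 1, -γ 3 1, γ 0 1, γ 1 1] := by
  ext i j
  fin_cases i <;> fin_cases j <;>
    · simp only [Matrix.neg_apply, Matrix.mul_apply, Fin.sum_univ_four, Matrix.transpose_apply, J4]
      norm_num [Matrix.cons_val', Matrix.cons_val_zero, Matrix.cons_val_one, Matrix.head_cons,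
        Matrix.empty_val', Matrix.cons_val_fin_one, Matrix.head_fin_const]
      try simp [Matrix.vecHead, Matrix.vecTail]
      try ring

lemma norm_le_pinv {w : ℚ_[p]} (h : ‖w‖ < 1) : ‖w‖ ≤ (p : ℝ)⁻¹ := by
  have := (Padic.norm_lt_pow_iff_norm_le_pow_sub_one w 0).mp (by simpa using h)
  simpa using this

set_option maxHeartbeats 1000000 in
lemma key {p : ℕ} [Fact p.Prime] {x y z : ℚ_[p]} {q γ : Matrix (Fin 4) (Fin 4) ℚ_[p]}
    (hq : q ∈ PK p) (hγ : γ ∈ Bp p)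
    (heq : s1 p * s2 p * s1 p * nK p x y z = q * γ) :
    (1 < ‖z‖ ∧ ‖x‖ < ‖z‖ ∧ ‖y‖ < ‖z‖) ∧
    ((∃ u : ℚ_[p], ‖u‖ = 1 ∧ q 0 0 = z⁻¹ * u) ∧
      ∃ γ' ∈ Gamma0 p,
        m2K p q = !![-1 + x * y / z, -(y ^ 2) / z; -(x ^ 2) / z, 1 + x * y / z] * γ') := by
  obtain ⟨⟨hdetq, μq, hμq0, hsymq⟩, hPK10, hPK20, hPK30, hPK21, hPK23⟩ := hq
  obtain ⟨hint, ⟨μ, hμ, hsymγ⟩, b10, b20, b30, b21, b31, b23⟩ := hγ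
  have hμ0 : μ ≠ 0 := by intro h; rw [h] at hμ; simp at hμ
  have hμinv : ‖μ⁻¹‖ = 1 := by rw [norm_inv, hμ]; norm_num
  have hp1 : (1 : ℝ) < p := by exact_mod_cast (Fact.out : p.Prime).one_lt
  have hpinv1 : (p : ℝ)⁻¹ < 1 := by
    rw [inv_lt_one_iff₀]; right; exact hp1
  -- the "inverse" matrix of γ
  set G : Matrix (Fin 4) (Fin 4) ℚ_[p] :=
      !![γ 2 2, γ 3 2, -γ 0 2, -γ 1 2;
         γ 2 3, γ 3 3, -γ 0 3, -γ 1 3;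
         -γ 2 0, -γ 3 0, γ 0 0, γ 1 0;
         -γ 2 1, -γ 3 1, γ 0 1, γ 1 1] with hG
  have hδγ : (μ⁻¹ • G) * γ = 1 := by
    rw [hG, ← Gexp, Matrix.smul_mul, Matrix.neg_mul, Matrix.mul_assoc, Matrix.mul_assoc,
      ← Matrix.mul_assoc γᵀ, hsymγ, Matrix.mul_smul, JJ4]
    simp [smul_smul, inv_mul_cancel₀ hμ0]
  have hγδ : γ * (μ⁻¹ • G) = 1 := mul_eq_one_comm.mp hδγ
  have hM : q * γ = !![0,0,1,0; 0,1,y,0; -1,-x,-z,-y; 0,0,-x,1] := by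
    rw [← heq, Mexp]
  have hqe : q = !![0,0,1,0; 0,1,y,0; -1,-x,-z,-y; 0,0,-x,1] * (μ⁻¹ • G) := by
    rw [← hM, Matrix.mul_assoc, hγδ, Matrix.mul_one]
  -- entries of q
  have h00 : q 0 0 = μ⁻¹ * (-γ 2 0) := by
    rw [hqe]
    simp [-mul_eq_mul_left_iff, hG, Matrix.smul_apply, Matrix.mul_apply, Fin.sum_univ_four,
      Matrix.cons_val_two, Matrix.cons_val_three, Matrix.vecHead, Matrix.vecTail]
  have h10 : q 1 0 = μ⁻¹ * (γ 2 3 - y * γ 2 0) := by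
    rw [hqe]
    simp [-mul_eq_mul_left_iff, hG, Matrix.smul_apply, Matrix.mul_apply, Fin.sum_univ_four,
      Matrix.cons_val_two, Matrix.cons_val_three, Matrix.vecHead, Matrix.vecTail]
    ring
  have h30 : q 3 0 = μ⁻¹ * (x * γ 2 0 - γ 2 1) := by
    rw [hqe]
    simp [-mul_eq_mul_left_iff, hG, Matrix.smul_apply, Matrix.mul_apply, Fin.sum_univ_four,
      Matrix.cons_val_two, Matrix.cons_val_three, Matrix.vecHead, Matrix.vecTail]
    ring
  have h20 : q 2 0 = μ⁻¹ * (z * γ 2 0 + y * γ 2 1 - γ 2 2 - x * γ 2 3) := by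
    rw [hqe]
    simp [-mul_eq_mul_left_iff, hG, Matrix.smul_apply, Matrix.mul_apply, Fin.sum_univ_four,
      Matrix.cons_val_two, Matrix.cons_val_three, Matrix.vecHead, Matrix.vecTail]
    ring
  have h21 : q 2 1 = μ⁻¹ * (z * γ 3 0 + y * γ 3 1 - γ 3 2 - x * γ 3 3) := by
    rw [hqe]
    simp [-mul_eq_mul_left_iff, hG, Matrix.smul_apply, Matrix.mul_apply, Fin.sum_univ_four,
      Matrix.cons_val_two, Matrix.cons_val_three, Matrix.vecHead, Matrix.vecTail]
    ring
  have h23 : q 2 3 = μ⁻¹ * (γ 1 2 + x * γ 1 3 - z * γ 1 0 - y * γ 1 1) := by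
    rw [hqe]
    simp [-mul_eq_mul_left_iff, hG, Matrix.smul_apply, Matrix.mul_apply, Fin.sum_univ_four,
      Matrix.cons_val_two, Matrix.cons_val_three, Matrix.vecHead, Matrix.vecTail]
    ring
  have h11 : q 1 1 = μ⁻¹ * (γ 3 3 - y * γ 3 0) := by
    rw [hqe]
    simp [-mul_eq_mul_left_iff, hG, Matrix.smul_apply, Matrix.mul_apply, Fin.sum_univ_four,
      Matrix.cons_val_two, Matrix.cons_val_three, Matrix.vecHead, Matrix.vecTail]
    ring
  have h13 : q 1 3 = μ⁻¹ * (y * γ 1 0 - γ 1 3) := by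
    rw [hqe]
    simp [-mul_eq_mul_left_iff, hG, Matrix.smul_apply, Matrix.mul_apply, Fin.sum_univ_four,
      Matrix.cons_val_two, Matrix.cons_val_three, Matrix.vecHead, Matrix.vecTail]
    ring
  have h31 : q 3 1 = μ⁻¹ * (x * γ 3 0 - γ 3 1) := by
    rw [hqe]
    simp [-mul_eq_mul_left_iff, hG, Matrix.smul_apply, Matrix.mul_apply, Fin.sum_univ_four,
      Matrix.cons_val_two, Matrix.cons_val_three, Matrix.vecHead, Matrix.vecTail]
    ring
  have h33 : q 3 3 = μ⁻¹ * (γ 1 1 - x * γ 1 0) := by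
    rw [hqe]
    simp [-mul_eq_mul_left_iff, hG, Matrix.smul_apply, Matrix.mul_apply, Fin.sum_univ_four,
      Matrix.cons_val_two, Matrix.cons_val_three, Matrix.vecHead, Matrix.vecTail]
    ring
  -- the linear equations
  have hres : ∀ w : ℚ_[p], μ⁻¹ * w = 0 → w = 0 := fun w hw =>
    (mul_eq_zero.mp hw).resolve_left (inv_ne_zero hμ0)
  have E1 : γ 2 3 = y * γ 2 0 := by
    have := hres _ (h10 ▸ hPK10); linear_combination this
  have E2 : γ 2 1 = x * γ 2 0 := by
    have := hres _ (h30 ▸ hPK30); linear_combination -this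
  have E3 : γ 2 2 = z * γ 2 0 := by
    have h := hres _ (h20 ▸ hPK20); linear_combination -h + y * E2 - x * E1
  have E4 : γ 3 2 = z * γ 3 0 + y * γ 3 1 - x * γ 3 3 := by
    have h := hres _ (h21 ▸ hPK21); linear_combination -h
  have E5 : γ 1 2 = z * γ 1 0 + y * γ 1 1 - x * γ 1 3 := by
    have h := hres _ (h23 ▸ hPK23); linear_combination h
  -- γ 2 2 is a unit
  have hent : (γ * (μ⁻¹ • G)) 2 2 =
      μ⁻¹ * (γ 2 2 * γ 0 0 + (γ 2 3 * γ 0 1 - γ 2 0 * γ 0 2 - γ 2 1 * γ 0 3)) := by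
    simp [-mul_eq_mul_left_iff, hG, Matrix.smul_apply, Matrix.mul_apply, Fin.sum_univ_four,
      Matrix.cons_val_two, Matrix.cons_val_three, Matrix.vecHead, Matrix.vecTail]
    ring
  have hent1 : μ⁻¹ * (γ 2 2 * γ 0 0 + (γ 2 3 * γ 0 1 - γ 2 0 * γ 0 2 - γ 2 1 * γ 0 3)) = 1 := by
    rw [← hent, hγδ]; simp [Matrix.one_apply]
  have hSμ : γ 2 2 * γ 0 0 + (γ 2 3 * γ 0 1 - γ 2 0 * γ 0 2 - γ 2 1 * γ 0 3) = μ := by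
    have := congrArg (fun w => μ * w) hent1
    simpa [← mul_assoc, mul_inv_cancel₀ hμ0] using this
  have hsmall_mul : ∀ a b : ℚ_[p], ‖a‖ ≤ (p:ℝ)⁻¹ → ‖b‖ ≤ 1 → ‖a * b‖ ≤ (p:ℝ)⁻¹ := by
    intro a b ha hb
    rw [norm_mul]
    calc ‖a‖ * ‖b‖ ≤ (p:ℝ)⁻¹ * 1 :=
          mul_le_mul ha hb (norm_nonneg _) (by positivity)
      _ = (p:ℝ)⁻¹ := mul_one _
  have hT : ‖γ 2 3 * γ 0 1 - γ 2 0 * γ 0 2 - γ 2 1 * γ 0 3‖ ≤ (p:ℝ)⁻¹ := by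
    have t1 := hsmall_mul _ _ b23 (hint 0 1)
    have t2 := hsmall_mul _ _ b20 (hint 0 2)
    have t3 := hsmall_mul _ _ b21 (hint 0 3)
    calc ‖γ 2 3 * γ 0 1 - γ 2 0 * γ 0 2 - γ 2 1 * γ 0 3‖
        ≤ max ‖γ 2 3 * γ 0 1 - γ 2 0 * γ 0 2‖ ‖γ 2 1 * γ 0 3‖ := by
          simpa [sub_eq_add_neg] using
            Padic.nonarchimedean (γ 2 3 * γ 0 1 - γ 2 0 * γ 0 2) (-(γ 2 1 * γ 0 3))
      _ ≤ max (max ‖γ 2 3 * γ 0 1‖ ‖γ 2 0 * γ 0 2‖) ‖γ 2 1 * γ 0 3‖ := by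
          apply max_le_max _ le_rfl
          simpa [sub_eq_add_neg] using
            Padic.nonarchimedean (γ 2 3 * γ 0 1) (-(γ 2 0 * γ 0 2))
      _ ≤ (p:ℝ)⁻¹ := by
          apply max_le (max_le t1 t2) t3
  have hn2200 : ‖γ 2 2 * γ 0 0‖ = 1 := by
    have hrepr : γ 2 2 * γ 0 0 = μ - (γ 2 3 * γ 0 1 - γ 2 0 * γ 0 2 - γ 2 1 * γ 0 3) := by
      linear_combination hSμ
    have hub : ‖γ 2 2 * γ 0 0‖ ≤ 1 := by
      rw [hrepr, sub_eq_add_neg]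
      refine le_trans (Padic.nonarchimedean _ _) (max_le (le_of_eq hμ) ?_)
      rw [norm_neg]; linarith
    have hlb : (1:ℝ) ≤ ‖γ 2 2 * γ 0 0‖ := by
      have hmu : μ = γ 2 2 * γ 0 0 + (γ 2 3 * γ 0 1 - γ 2 0 * γ 0 2 - γ 2 1 * γ 0 3) := by
        linear_combination -hSμ
      have := Padic.nonarchimedean (γ 2 2 * γ 0 0)
        (γ 2 3 * γ 0 1 - γ 2 0 * γ 0 2 - γ 2 1 * γ 0 3)
      rw [← hmu, hμ] at this
      rcases le_max_iff.mp this with h | h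
      · exact h
      · linarith
    linarith
  have hn22 : ‖γ 2 2‖ = 1 := by
    rw [norm_mul] at hn2200
    have h1 := hint 2 2
    have h2 := hint 0 0
    have h3 := norm_nonneg (γ 2 2)
    have h4 := norm_nonneg (γ 0 0)
    nlinarith
  have h22ne : γ 2 2 ≠ 0 := by
    intro h; rw [h] at hn22; simp at hn22
  have hz0 : z ≠ 0 := by
    intro h; rw [h, zero_mul] at E3; exact h22ne E3
  have h20ne : γ 2 0 ≠ 0 := by
    intro h; rw [h, mul_zero] at E3; exact h22ne E3
  have hnz1 : ‖z‖ * ‖γ 2 0‖ = 1 := by rw [← norm_mul, ← E3]; exact hn22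
  have h20pos : 0 < ‖γ 2 0‖ := norm_pos_iff.mpr h20ne
  have hzpos : 0 < ‖z‖ := by nlinarith
  have hz_gt : 1 < ‖z‖ := by nlinarith
  have hxz : ‖x * z⁻¹‖ ≤ (p:ℝ)⁻¹ := by
    have hrepr : x * z⁻¹ = γ 2 1 * (γ 2 2)⁻¹ := by
      rw [E2, E3]; field_simp
    rw [hrepr, norm_mul, norm_inv, hn22]
    simpa using b21
  have hyz : ‖y * z⁻¹‖ ≤ (p:ℝ)⁻¹ := by
    have hrepr : y * z⁻¹ = γ 2 3 * (γ 2 2)⁻¹ := by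
      rw [E1, E3]; field_simp
    rw [hrepr, norm_mul, norm_inv, hn22]
    simpa using b23
  have hlt_of : ∀ w : ℚ_[p], ‖w * z⁻¹‖ < 1 → ‖w‖ < ‖z‖ := by
    intro w hw
    rw [norm_mul, norm_inv] at hw
    calc ‖w‖ = ‖w‖ * ‖z‖⁻¹ * ‖z‖ := by field_simp
      _ < 1 * ‖z‖ := by exact mul_lt_mul_of_pos_right hw hzpos
      _ = ‖z‖ := one_mul _
  have hx_lt : ‖x‖ < ‖z‖ := hlt_of x (lt_of_le_of_lt hxz hpinv1)
  have hy_lt : ‖y‖ < ‖z‖ := hlt_of y (lt_of_le_of_lt hyz hpinv1)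
  refine ⟨⟨hz_gt, hx_lt, hy_lt⟩, ⟨-(μ⁻¹ * γ 2 2), ?_, ?_⟩, ?_⟩
  · rw [norm_neg, norm_mul, hμinv, hn22]; norm_num
  · rw [h00, E3]; field_simp
  · -- the m2 claim
    have hpinvle1 : (p:ℝ)⁻¹ ≤ 1 := le_of_lt hpinv1
    have hb2 : ∀ a b : ℚ_[p], ‖a‖ ≤ 1 → ‖b‖ ≤ 1 → ‖μ⁻¹ * (a - b)‖ ≤ 1 := by
      intro a b ha hb
      rw [norm_mul, hμinv, one_mul, sub_eq_add_neg]
      refine le_trans (Padic.nonarchimedean _ _) (max_le ha ?_)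
      rw [norm_neg]; exact hb
    have hbp : ∀ a b : ℚ_[p], ‖a‖ ≤ (p:ℝ)⁻¹ → ‖b‖ ≤ (p:ℝ)⁻¹ → ‖μ⁻¹ * (a - b)‖ ≤ (p:ℝ)⁻¹ := by
      intro a b ha hb
      rw [norm_mul, hμinv, one_mul, sub_eq_add_neg]
      refine le_trans (Padic.nonarchimedean _ _) (max_le ha ?_)
      rw [norm_neg]; exact hb
    -- relation between the two similitude factors
    have hJ : (q * γ)ᵀ * J4 p * (q * γ) = J4 p := by rw [hM]; exact MJM x y z
    have hcalc : (μq * μ) • J4 p = J4 p := by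
      calc (μq * μ) • J4 p = μq • (μ • J4 p) := by rw [smul_smul]
        _ = μq • (γᵀ * J4 p * γ) := by rw [hsymγ]
        _ = γᵀ * (μq • J4 p) * γ := by rw [Matrix.mul_smul, Matrix.smul_mul]
        _ = γᵀ * (qᵀ * J4 p * q) * γ := by rw [hsymq]
        _ = (q * γ)ᵀ * J4 p * (q * γ) := by
              rw [Matrix.transpose_mul]; simp only [Matrix.mul_assoc]
        _ = J4 p := hJ
    have hμqμ : μq * μ = 1 := by
      have h02 := congrFun (congrFun hcalc 0) 2
      simpa [J4, Matrix.smul_apply] using h02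
    have hμqinv : μq = μ⁻¹ := by field_simp; linear_combination hμqμ
    have hnμq : ‖μq‖ = 1 := by rw [hμqinv]; exact hμinv
    -- det of the m2 block
    have hm2q : q 1 1 * q 3 3 - q 3 1 * q 1 3 = μq := by
      have h13e := congrFun (congrFun hsymq 1) 3
      simp [J4, Matrix.mul_apply, Matrix.transpose_apply, Fin.sum_univ_four,
        Matrix.smul_apply, hPK21, hPK23] at h13e
      linear_combination h13e
    -- the Γ₀(p) element
    have hAγ : m2K p q = !![-1 + x * y / z, -(y ^ 2) / z; -(x ^ 2) / z, 1 + x * y / z] *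
        !![μ⁻¹ * (y * z⁻¹ * γ 3 2 - γ 3 3), μ⁻¹ * (γ 1 3 - y * z⁻¹ * γ 1 2);
           μ⁻¹ * (x * z⁻¹ * γ 3 2 - γ 3 1), μ⁻¹ * (γ 1 1 - x * z⁻¹ * γ 1 2)] := by
      ext i j
      fin_cases i <;> fin_cases j <;>
        simp only [m2K, Matrix.mul_apply, Fin.sum_univ_two, Matrix.cons_val',
          Matrix.cons_val_zero, Matrix.cons_val_one, Matrix.head_cons, Matrix.empty_val',
          Matrix.cons_val_fin_one, Matrix.head_fin_const, Matrix.of_apply, Fin.zero_eta, Fin.mk_one]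
      · rw [h11, E4]; field_simp; ring
      · rw [h13, E5]; field_simp; ring
      · rw [h31, E4]; field_simp; ring
      · rw [h33, E5]; field_simp; ring
    refine ⟨!![μ⁻¹ * (y * z⁻¹ * γ 3 2 - γ 3 3), μ⁻¹ * (γ 1 3 - y * z⁻¹ * γ 1 2);
              μ⁻¹ * (x * z⁻¹ * γ 3 2 - γ 3 1), μ⁻¹ * (γ 1 1 - x * z⁻¹ * γ 1 2)],
      ⟨?_, ?_, ?_⟩, hAγ⟩
    · intro i j
      fin_cases i <;> fin_cases j <;>
        simp only [Matrix.cons_val', Matrix.cons_val_zero, Matrix.cons_val_one,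
          Matrix.head_cons, Matrix.empty_val', Matrix.cons_val_fin_one,
          Matrix.head_fin_const, Matrix.of_apply]
      · exact hb2 _ _ (le_trans (hsmall_mul _ _ hyz (hint 3 2)) hpinvle1) (hint 3 3)
      · exact hb2 _ _ (hint 1 3) (le_trans (hsmall_mul _ _ hyz (hint 1 2)) hpinvle1)
      · exact hb2 _ _ (le_trans (hsmall_mul _ _ hxz (hint 3 2)) hpinvle1)
          (le_trans b31 hpinvle1)
      · exact hb2 _ _ (hint 1 1) (le_trans (hsmall_mul _ _ hxz (hint 1 2)) hpinvle1)
    · have hdA : (!![-1 + x * y / z, -(y ^ 2) / z; -(x ^ 2) / z, 1 + x * y / z] :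
          Matrix (Fin 2) (Fin 2) ℚ_[p]).det = -1 := by
        simp [Matrix.det_fin_two_of]; field_simp; ring
      have hd2 : (m2K p q).det = μq := by
        simp [m2K, Matrix.det_fin_two_of]; linear_combination hm2q
      have hdg : (!![μ⁻¹ * (y * z⁻¹ * γ 3 2 - γ 3 3), μ⁻¹ * (γ 1 3 - y * z⁻¹ * γ 1 2);
          μ⁻¹ * (x * z⁻¹ * γ 3 2 - γ 3 1), μ⁻¹ * (γ 1 1 - x * z⁻¹ * γ 1 2)] :
          Matrix (Fin 2) (Fin 2) ℚ_[p]).det = -μq := by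
        have h := congrArg Matrix.det hAγ
        rw [Matrix.det_mul, hdA, hd2] at h
        linear_combination h
      rw [hdg, norm_neg, hnμq]
    · simp only [Matrix.cons_val', Matrix.cons_val_zero, Matrix.cons_val_one,
        Matrix.head_cons, Matrix.empty_val', Matrix.cons_val_fin_one,
        Matrix.head_fin_const, Matrix.of_apply]
      exact hbp _ _ (hsmall_mul _ _ hxz (hint 3 2)) b31

lemma detJ4 : (J4 p).det = 1 := by
  simp [J4, Matrix.det_succ_row_zero, Fin.sum_univ_succ]
  rfl


set_option maxHeartbeats 1000000 in
lemma exists_fact {x y z : ℚ_[p]} (hz : 1 < ‖z‖) (hx : ‖x‖ < ‖z‖) (hy : ‖y‖ < ‖z‖) :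
    ∃ q ∈ PK p, ∃ γ ∈ Bp p,
      (!![0,0,1,0; 0,1,y,0; -1,-x,-z,-y; 0,0,-x,1] : Matrix (Fin 4) (Fin 4) ℚ_[p]) = q * γ := by
  have hz0 : z ≠ 0 := by intro h; rw [h] at hz; simp at hz; linarith
  have hzpos : (0:ℝ) < ‖z‖ := by linarith
  have hp1 : (1 : ℝ) < p := by exact_mod_cast (Fact.out : p.Prime).one_lt
  have hpinv1 : (p : ℝ)⁻¹ < 1 := by rw [inv_lt_one_iff₀]; right; exact hp1
  have hpinvle1 : (p:ℝ)⁻¹ ≤ 1 := le_of_lt hpinv1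
  have hpinv0 : (0:ℝ) ≤ (p:ℝ)⁻¹ := by positivity
  have hzinv : ‖z⁻¹‖ ≤ (p:ℝ)⁻¹ := by
    apply norm_le_pinv; rw [norm_inv]; exact inv_lt_one_of_one_lt₀ hz
  have hxz : ‖x * z⁻¹‖ ≤ (p:ℝ)⁻¹ := by
    apply norm_le_pinv; rw [norm_mul, norm_inv, ← div_eq_mul_inv]
    exact (div_lt_one hzpos).mpr hx
  have hyz : ‖y * z⁻¹‖ ≤ (p:ℝ)⁻¹ := by
    apply norm_le_pinv; rw [norm_mul, norm_inv, ← div_eq_mul_inv]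
    exact (div_lt_one hzpos).mpr hy
  have h1p : ‖z‖⁻¹ ≤ (p:ℝ)⁻¹ := by rw [← norm_inv]; exact hzinv
  have h2p : ‖x‖ * ‖z‖⁻¹ ≤ (p:ℝ)⁻¹ := by rw [← norm_inv, ← norm_mul]; exact hxz
  have h3p : ‖y‖ * ‖z‖⁻¹ ≤ (p:ℝ)⁻¹ := by rw [← norm_inv, ← norm_mul]; exact hyz
  have h1one : ‖z‖⁻¹ ≤ 1 := le_trans h1p hpinvle1
  have h2one : ‖x‖ * ‖z‖⁻¹ ≤ 1 := le_trans h2p hpinvle1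
  have h3one : ‖y‖ * ‖z‖⁻¹ ≤ 1 := le_trans h3p hpinvle1
  refine ⟨!![-z⁻¹, -(x*z⁻¹), 1, -(y*z⁻¹); 0, 1 - x*y*z⁻¹, y, -(y^2*z⁻¹);
            0, 0, -z, 0; 0, x^2*z⁻¹, -x, 1 + x*y*z⁻¹],
    ⟨⟨?_, 1, one_ne_zero, ?_⟩, ?_, ?_, ?_, ?_, ?_⟩,
    !![1, 0, 0, 0; -(y*z⁻¹), 1, 0, 0; z⁻¹, x*z⁻¹, 1, y*z⁻¹; x*z⁻¹, 0, 0, 1],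
    ⟨?_, ⟨1, by simp, ?_⟩, ?_, ?_, ?_, ?_, ?_, ?_⟩, ?_⟩
  · -- det ≠ 0
    have hd : (!![-z⁻¹, -(x*z⁻¹), 1, -(y*z⁻¹); 0, 1 - x*y*z⁻¹, y, -(y^2*z⁻¹);
            0, 0, -z, 0; 0, x^2*z⁻¹, -x, 1 + x*y*z⁻¹] :
            Matrix (Fin 4) (Fin 4) ℚ_[p]).det = 1 := by
      simp [Matrix.det_succ_row_zero, Fin.sum_univ_succ]
      field_simp
      ring
    rw [hd]; exact one_ne_zero
  · -- symplectic
    ext i j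
    fin_cases i <;> fin_cases j <;>
      · simp [J4, Matrix.mul_apply, Matrix.transpose_apply, Fin.sum_univ_four]
        try simp [Matrix.vecHead, Matrix.vecTail, Matrix.transpose_apply]
        try field_simp
        try ring
  · simp [Matrix.vecHead, Matrix.vecTail]
  · simp [Matrix.vecHead, Matrix.vecTail]
  · simp [Matrix.vecHead, Matrix.vecTail]
  · simp [Matrix.vecHead, Matrix.vecTail]
  · simp [Matrix.vecHead, Matrix.vecTail]
  · -- γ entries bounded
    intro i j
    fin_cases i <;> fin_cases j <;> simp <;> assumption
  · -- γ symplectic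
    ext i j
    fin_cases i <;> fin_cases j <;>
      · simp [J4, Matrix.mul_apply, Matrix.transpose_apply, Fin.sum_univ_four]
        try simp [Matrix.vecHead, Matrix.vecTail, Matrix.transpose_apply]
        try field_simp
        try ring
  · simp
    try assumption
  · simp
    try assumption
  · simp
    try assumption
  · simp
    try assumption
  · simp
    try assumption
  · simp
    try assumption
  · -- the product identity
    ext i j
    fin_cases i <;> fin_cases j <;>
      · simp [Matrix.mul_apply, Fin.sum_univ_four]
        try simp [Matrix.vecHead, Matrix.vecTail]
        try field_simp
        try ring


lemma addval_lt_iff (a b : ℚ_[p]) :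
    Padic.addValuation b < Padic.addValuation a ↔ ‖a‖ < ‖b‖ := by
  have hv0 : Padic.addValuation (0 : ℚ_[p]) = ⊤ := by
    simp [Padic.addValuation, AddValuation.of_apply, Padic.addValuationDef]
  have h1p : (1 : ℝ) < p := by exact_mod_cast (Fact.out : p.Prime).one_lt
  by_cases hb : b = 0
  · simp [hb, hv0]
  by_cases ha : a = 0
  · simp [ha, hv0, Padic.addValuation.apply hb, WithTop.coe_lt_top,
      norm_pos_iff, hb]
  · rw [Padic.norm_eq_zpow_neg_valuation ha, Padic.norm_eq_zpow_neg_valuation hb,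
      Padic.addValuation.apply ha, Padic.addValuation.apply hb,
      WithTop.coe_lt_coe, (zpow_right_strictMono₀ h1p).lt_iff_lt]
    omega

end Aux


/-- `σ·n ∈ P_K(ℚ_p)·B(p)` iff `v_p(z) < min{0, v_p(x), v_p(y)}` (here
`σ = s₁s₂s₁` and `n` is the unipotent matrix attached to `(x,y,z)`); moreover in that case
any factorization `σ·n = q·γ` with `q ∈ P_K(ℚ_p)`, `γ ∈ B(p)` satisfies
`m₁(q) ∈ z⁻¹·ℤ_p^×` and `m₂(q) ∈ [[−1+xy/z, −y²/z],[−x²/z, 1+xy/z]]·Γ₀(p)`. -/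
theorem stmt_6 (p : ℕ) [Fact p.Prime] (x y z : ℚ_[p]) :
    ((∃ q ∈ PK p, ∃ γ ∈ Bp p, s1 p * s2 p * s1 p * nK p x y z = q * γ) ↔
      Padic.addValuation z <
        min 0 (min (Padic.addValuation x) (Padic.addValuation y))) ∧
    (∀ q γ : Matrix (Fin 4) (Fin 4) ℚ_[p], q ∈ PK p → γ ∈ Bp p →
      s1 p * s2 p * s1 p * nK p x y z = q * γ →
      (∃ u : ℚ_[p], ‖u‖ = 1 ∧ q 0 0 = z⁻¹ * u) ∧
      ∃ γ' ∈ Gamma0 p,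
        m2K p q = !![-1 + x * y / z, -(y ^ 2) / z; -(x ^ 2) / z, 1 + x * y / z] * γ') := by
  have h0 : Padic.addValuation (1 : ℚ_[p]) = (0 : WithTop ℤ) := by
    rw [Padic.addValuation.apply one_ne_zero, Padic.valuation_one]; rfl
  constructor
  · rw [lt_min_iff, lt_min_iff, ← h0, addval_lt_iff, addval_lt_iff, addval_lt_iff, norm_one]
    constructor
    · rintro ⟨q, hq, γ, hγ, heq⟩
      exact (key hq hγ heq).1
    · rintro ⟨h1, h2, h3⟩
      rw [Mexp]
      exact exists_fact h1 h2 h3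
  · intro q γ hq hγ heq
    exact (key hq hγ heq).2
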